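/- Let f : ℝ^d → ℝ be continuously differentiable with a nonempty set S of global minimizers, let ∅ ≠ S̃ ⊆ S, let P(·; S̃) : ℝ^d → ℝ be nonnegative, and suppose there exist constants c₁ > 0, c₂ ≥ 0 such that ⟨∇f(x), x − proj_{S̃}(x)⟩ ≥ c₁ P(x; S̃) − c₂ for all x ∈ ℝ^d, where proj_{S̃}(x) is a point of S̃ closest to x. Let (x^k) be gradient descent iterates x^{k+1} = x^k − γ^k ∇f(x^k), where for all k the stepsize satisfies 0 < γ^k ≤ (2−α)(⟨∇f(x^k), x^k − x^k_p⟩ + c₂ + β^k)/‖∇f(x^k)‖² with 0 < α < 2, β^k > 0, and x^k_p := proj_{S̃}(x^k). Then for all k ≥ 0: ‖x^{k+1} − x^{k+1}_p‖² ≤ ‖x^k − x^k_p‖² − α c₁ γ^k P(x^k; S̃) + (2−α) β^k γ^k + 2 c₂ γ^k. -/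

import Mathlib

open scoped RealInnerProductSpace

/-- Theorem 1 (descent inequality) of "A Novel Unified Parametric Assumption for
Nonconvex Optimization": under the unified parametric assumption, gradient descent
with a suitably bounded stepsize satisfies the stated per-iteration descent inequality. -/
theorem descent_inequality_deterministic
    {d : ℕ} (f : EuclideanSpace ℝ (Fin d) → ℝ)
    (hf : ContDiff ℝ 1 f)
    (S St : Set (EuclideanSpace ℝ (Fin d)))
    (hSne : S.Nonempty)
    (hSmin : ∀ s ∈ S, ∀ y, f s ≤ f y)
    (hStS : St ⊆ S) (hStne : St.Nonempty)
    (proj : EuclideanSpace ℝ (Fin d) → EuclideanSpace ℝ (Fin d))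
    (hproj : ∀ y, proj y ∈ St ∧ ∀ z ∈ St, ‖y - proj y‖ ≤ ‖y - z‖)
    (P : EuclideanSpace ℝ (Fin d) → ℝ) (hP : ∀ y, 0 ≤ P y)
    (c₁ c₂ : ℝ) (hc₁ : 0 < c₁) (hc₂ : 0 ≤ c₂)
    (hass : ∀ y, c₁ * P y - c₂ ≤ ⟪gradient f y, y - proj y⟫)
    (α : ℝ) (hα₁ : 0 < α) (hα₂ : α < 2)
    (β : ℕ → ℝ) (hβ : ∀ k, 0 < β k)
    (x : ℕ → EuclideanSpace ℝ (Fin d)) (γ : ℕ → ℝ)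
    (hupd : ∀ k, x (k + 1) = x k - γ k • gradient f (x k))
    (hγ : ∀ k, 0 < γ k ∧
      γ k ≤ (2 - α) * (⟪gradient f (x k), x k - proj (x k)⟫ + c₂ + β k) /
        ‖gradient f (x k)‖ ^ 2) :
    ∀ k : ℕ, ‖x (k + 1) - proj (x (k + 1))‖ ^ 2 ≤
      ‖x k - proj (x k)‖ ^ 2 - α * c₁ * γ k * P (x k)
        + (2 - α) * β k * γ k + 2 * c₂ * γ k := by
  intro k
  obtain ⟨hγpos, hγle⟩ := hγ k
  set g := gradient f (x k) with hg
  set p := proj (x k) with hp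
  set I := ⟪g, x k - p⟫ with hI
  -- key: γ² ‖g‖² ≤ γ (2-α)(I + c₂ + β k)
  have hkey : γ k ^ 2 * ‖g‖ ^ 2 ≤ γ k * ((2 - α) * (I + c₂ + β k)) := by
    rcases eq_or_lt_of_le (sq_nonneg ‖g‖) with h0 | h0
    · have hInn : I = 0 := by
        have : g = 0 := by
          have := h0.symm
          simpa [pow_eq_zero_iff, norm_eq_zero] using this
        simp [hI, this]
      have hIc : (0:ℝ) ≤ c₂ + β k := by linarith [hβ k]
      rw [← h0, hInn]
      have : (0:ℝ) ≤ (2 - α) * (c₂ + β k) := mul_nonneg (by linarith) hIc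
      nlinarith [hγpos.le]
    · have h1 : γ k * ‖g‖ ^ 2 ≤ (2 - α) * (I + c₂ + β k) := by
        rw [div_eq_mul_inv] at hγle
        calc γ k * ‖g‖ ^ 2 ≤ ((2 - α) * (I + c₂ + β k) * (‖g‖ ^ 2)⁻¹) * ‖g‖ ^ 2 :=
              by nlinarith
          _ = (2 - α) * (I + c₂ + β k) := by rw [inv_mul_cancel_right₀ (ne_of_gt h0)]
      nlinarith [hγpos.le]
  -- projection optimality
  have h2 : ‖x (k + 1) - proj (x (k + 1))‖ ≤ ‖x (k + 1) - p‖ :=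
    (hproj (x (k + 1))).2 p (hproj (x k)).1
  have h2' : ‖x (k + 1) - proj (x (k + 1))‖ ^ 2 ≤ ‖x (k + 1) - p‖ ^ 2 := by
    exact pow_le_pow_left₀ (norm_nonneg _) h2 2
  -- expansion
  have h3 : ‖x (k + 1) - p‖ ^ 2 = ‖x k - p‖ ^ 2 - 2 * (γ k * I) + γ k ^ 2 * ‖g‖ ^ 2 := by
    rw [hupd k, sub_right_comm]
    rw [norm_sub_sq_real]
    rw [real_inner_smul_right, norm_smul]
    rw [mul_pow]
    have : ⟪x k - p, g⟫ = I := real_inner_comm _ _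
    rw [this]
    simp [Real.norm_eq_abs, sq_abs]
    try ring
    exact Or.inl rfl
  have h4 := hass (x k)
  have hPk := hP (x k)
  nlinarith [hγpos.le, mul_le_mul_of_nonneg_left h4 (mul_nonneg hα₁.le hγpos.le)]
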